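/- Let h : ℝ^m → ℝ be proper, lsc, and convex, and suppose sequences z^ν → z̄ ∈ dom h, y^ν ∈ ℝ^m with ‖y^ν‖ → ∞, c^ν → 0, and y^ν + c^ν ∈ ∂h(z^ν) for all ν. If v^ν = y^ν/‖y^ν‖ → v̄ along a subsequence, then v̄ ∈ N_{dom h}(z̄), the normal cone to the domain of h at z̄. -/

import Mathlib

open Filter

/-- The proper, lsc, convex extended-real function `h` is encoded by its (nonempty,
convex) domain `D` together with its real values on `D`, lower semicontinuity on `D`,
and convexity on `D`. Subgradients and the normal cone are taken relative to `D`. -/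
theorem stmt9 (m : ℕ) (D : Set (EuclideanSpace ℝ (Fin m)))
    (hD : D.Nonempty) (hDconv : Convex ℝ D)
    (h : EuclideanSpace ℝ (Fin m) → ℝ)
    (hconv : ConvexOn ℝ D h)
    (hlsc : LowerSemicontinuousOn h D)
    (z : ℕ → EuclideanSpace ℝ (Fin m)) (zbar : EuclideanSpace ℝ (Fin m))
    (hzD : ∀ ν, z ν ∈ D) (hzbarD : zbar ∈ D)
    (hzconv : Tendsto z atTop (nhds zbar))
    (y c : ℕ → EuclideanSpace ℝ (Fin m))
    (hynorm : Tendsto (fun ν => ‖y ν‖) atTop atTop)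
    (hc : Tendsto c atTop (nhds 0))
    (hsub : ∀ ν, ∀ z' ∈ D, h (z ν) + (inner ℝ (y ν + c ν) (z' - z ν) : ℝ) ≤ h z')
    (φ : ℕ → ℕ) (hφ : StrictMono φ)
    (vbar : EuclideanSpace ℝ (Fin m))
    (hv : Tendsto (fun ν => (‖y (φ ν)‖)⁻¹ • y (φ ν)) atTop (nhds vbar)) :
    ∀ z' ∈ D, (inner ℝ vbar (z' - zbar) : ℝ) ≤ 0 := by
  intro z' hz'
  have hφtop : Tendsto φ atTop atTop := hφ.tendsto_atTop
  have hynormφ : Tendsto (fun ν => ‖y (φ ν)‖) atTop atTop := hynorm.comp hφtop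
  have hzφ : Tendsto (fun ν => z (φ ν)) atTop (nhds zbar) := hzconv.comp hφtop
  have hcφ : Tendsto (fun ν => c (φ ν)) atTop (nhds 0) := hc.comp hφtop
  have hinv : Tendsto (fun ν => (‖y (φ ν)‖)⁻¹) atTop (nhds 0) :=
    tendsto_inv_atTop_zero.comp hynormφ
  -- lower semicontinuity bound: eventually h zbar - 1 < h (z (φ ν))
  have hzφ' : Tendsto (fun ν => z (φ ν)) atTop (nhdsWithin zbar D) :=
    tendsto_nhdsWithin_of_tendsto_nhds_of_eventually_within _ hzφ
      (Eventually.of_forall fun ν => hzD _)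
  have hlb : ∀ᶠ ν in atTop, h zbar - 1 < h (z (φ ν)) :=
    hzφ'.eventually (hlsc zbar hzbarD (h zbar - 1) (by linarith))
  set M : ℝ := h z' - h zbar + 1 with hM
  -- the sequence converging to inner ℝ vbar (z' - zbar)
  have hsmulc : Tendsto (fun ν => (‖y (φ ν)‖)⁻¹ • c (φ ν)) atTop (nhds 0) := by
    simpa using hinv.smul hcφ
  have hsmul : Tendsto (fun ν => (‖y (φ ν)‖)⁻¹ • (y (φ ν) + c (φ ν))) atTop (nhds vbar) := by
    have := hv.add hsmulc
    simp only [add_zero] at this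
    convert this using 2 with ν
    simp [smul_add]
  have hsubz : Tendsto (fun ν => z' - z (φ ν)) atTop (nhds (z' - zbar)) :=
    tendsto_const_nhds.sub hzφ
  have hA : Tendsto
      (fun ν => (inner ℝ ((‖y (φ ν)‖)⁻¹ • (y (φ ν) + c (φ ν))) (z' - z (φ ν)) : ℝ))
      atTop (nhds (inner ℝ vbar (z' - zbar) : ℝ)) := hsmul.inner hsubz
  have hB : Tendsto (fun ν => (‖y (φ ν)‖)⁻¹ * M) atTop (nhds 0) := by
    simpa using hinv.mul_const M
  refine le_of_tendsto_of_tendsto hA hB ?_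
  filter_upwards [hlb] with ν hlbν
  have hnn : (0:ℝ) ≤ (‖y (φ ν)‖)⁻¹ := by positivity
  have h1 : (inner ℝ (y (φ ν) + c (φ ν)) (z' - z (φ ν)) : ℝ) ≤ M := by
    have := hsub (φ ν) z' hz'
    simp only [hM]
    linarith
  calc (inner ℝ ((‖y (φ ν)‖)⁻¹ • (y (φ ν) + c (φ ν))) (z' - z (φ ν)) : ℝ)
      = (‖y (φ ν)‖)⁻¹ * (inner ℝ (y (φ ν) + c (φ ν)) (z' - z (φ ν)) : ℝ) :=
        real_inner_smul_left _ _ _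
    _ ≤ (‖y (φ ν)‖)⁻¹ * M := mul_le_mul_of_nonneg_left h1 hnn
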